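/- arXiv:2603.22764 — 2 statements merged into one kernel-verified Lean document; each statement's English description precedes it below -/
import Mathlib

section
/- Let (B, ‖·‖) be a uniformly convex Banach space, C a nonempty bounded closed convex subset of B, and f : C → C an asymptotically nonexpansive mapping. If (x_n) is a sequence in C converging weakly to x and ‖x_n − f(x_n)‖ → 0, then f(x) = x. -/
open Filter

section XuAux
variable {B : Type*} [NormedAddCommGroup B] [NormedSpace ℝ B] [UniformConvexSpace B]

lemma xu_uc (ε : ℝ) (hε : 0 < ε) :
    ∃ δ > 0, ∀ r : ℝ, 0 ≤ r → ∀ u v : B, ‖u‖ ≤ r → ‖v‖ ≤ r → ε * r ≤ ‖u - v‖ →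
      ‖u + v‖ ≤ (2 - δ) * r := by
  obtain ⟨δ, hδ, h⟩ := exists_forall_closed_ball_dist_add_le_two_sub B hε
  refine ⟨δ, hδ, fun r hr0 u v hu hv huv => ?_⟩
  rcases eq_or_lt_of_le hr0 with h0 | h0
  · have hu0 : ‖u‖ = 0 := le_antisymm (by rw [← h0] at hu; exact hu) (norm_nonneg _)
    have hv0 : ‖v‖ = 0 := le_antisymm (by rw [← h0] at hv; exact hv) (norm_nonneg _)
    have hle : ‖u + v‖ ≤ 0 := (norm_add_le _ _).trans (by rw [hu0, hv0]; norm_num)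
    rw [← h0]
    simpa using hle
  · have hu' : ‖r⁻¹ • u‖ ≤ 1 := by
      rw [norm_smul, Real.norm_eq_abs, abs_of_pos (inv_pos.2 h0)]
      rw [inv_mul_le_iff₀ h0]; simpa using hu
    have hv' : ‖r⁻¹ • v‖ ≤ 1 := by
      rw [norm_smul, Real.norm_eq_abs, abs_of_pos (inv_pos.2 h0)]
      rw [inv_mul_le_iff₀ h0]; simpa using hv
    have hsep : ε ≤ ‖r⁻¹ • u - r⁻¹ • v‖ := by
      rw [← smul_sub, norm_smul, Real.norm_eq_abs, abs_of_pos (inv_pos.2 h0)]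
      rw [le_inv_mul_iff₀ h0]
      linarith [huv, mul_comm ε r]
    have := h hu' hv' hsep
    rw [← smul_add, norm_smul, Real.norm_eq_abs, abs_of_pos (inv_pos.2 h0)] at this
    calc ‖u + v‖ = r * (r⁻¹ * ‖u + v‖) := by field_simp
      _ ≤ r * (2 - δ) := by
          exact mul_le_mul_of_nonneg_left this hr0
      _ = (2 - δ) * r := mul_comm _ _

lemma xu_mid (D : ℝ) (hD : 0 ≤ D) (ε : ℝ) (hε : 0 < ε) :
    ∃ η > 0, ∀ x y w : B, ‖x - y‖ ≤ D →
      ‖w - x‖ ≤ ‖x - y‖ / 2 + η → ‖w - y‖ ≤ ‖x - y‖ / 2 + η →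
      ‖w - (2:ℝ)⁻¹ • (x + y)‖ ≤ ε := by
  have hDε : 0 < D + ε := by linarith
  obtain ⟨δ, hδ, huc⟩ := xu_uc (B := B) (2 * ε / (D + ε)) (by positivity)
  refine ⟨min (ε/2) (δ*ε/8), by positivity, fun x y w hxy hwx hwy => ?_⟩
  set η := min (ε/2) (δ*ε/8) with hη
  have hη1 : η ≤ ε/2 := min_le_left _ _
  have hη2 : η ≤ δ*ε/8 := min_le_right _ _
  have hη0 : 0 < η := by positivity
  set d := ‖x - y‖ with hd
  have hd0 : 0 ≤ d := norm_nonneg _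
  have hkey : w - (2:ℝ)⁻¹ • (x + y) = (2:ℝ)⁻¹ • ((w - x) - (y - w)) := by module
  have hnorm : ‖w - (2:ℝ)⁻¹ • (x + y)‖ = 2⁻¹ * ‖(w - x) - (y - w)‖ := by
    rw [hkey, norm_smul]; norm_num
  have hb : ‖y - w‖ ≤ d / 2 + η := by rw [norm_sub_rev]; exact hwy
  rcases le_or_gt d ε with hcase | hcase
  · rw [hnorm]
    have : ‖(w - x) - (y - w)‖ ≤ (d/2 + η) + (d/2 + η) :=
      (norm_sub_le _ _).trans (add_le_add hwx hb)
    nlinarith [this]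
  · by_contra hcon
    push_neg at hcon
    have hR : (0:ℝ) < d/2 + η := by positivity
    have hab : ‖(w - x) + (y - w)‖ = d := by
      have : (w - x) + (y - w) = y - x := by abel
      rw [this, norm_sub_rev]
    have hsep : (2 * ε / (D + ε)) * (d/2 + η) ≤ ‖(w - x) - (y - w)‖ := by
      have h1 : ‖(w - x) - (y - w)‖ > 2 * ε := by
        rw [hnorm] at hcon; nlinarith [hcon]
      have h2 : (2 * ε / (D + ε)) * (d/2 + η) ≤ 2 * ε := by
        rw [div_mul_eq_mul_div, div_le_iff₀ hDε]
        nlinarith [hxy, hη1]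
      linarith
    have := huc (d/2 + η) (le_of_lt hR) (w - x) (y - w) hwx hb hsep
    rw [hab] at this
    -- d ≤ (2 - δ)(d/2 + η)  ⇒  δ d /2 ≤ 2 η  ⇒ d ≤ ε/2
    have hd4 : δ * d / 2 ≤ 2 * η := by nlinarith
    have : d ≤ ε / 2 := by
      have h8 : δ * d ≤ δ * ε / 2 := by nlinarith
      nlinarith
    linarith

lemma xu_dyadic (C : Set B) (hconv : Convex ℝ C) (D : ℝ) (hD0 : 0 ≤ D)
    (hD : ∀ u ∈ C, ∀ v ∈ C, ‖u - v‖ ≤ D) :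
    ∀ (s : ℕ) (ε : ℝ), 0 < ε → ∃ η > 0, ∀ T : B → B,
      (∀ u ∈ C, ∀ v ∈ C, ‖T u - T v‖ ≤ ‖u - v‖ + η) →
      ∀ L : List B, L.length = 2^s → (∀ z ∈ L, z ∈ C ∧ ‖T z - z‖ ≤ η) →
      ((2:ℝ)^s)⁻¹ • L.sum ∈ C ∧ ‖T (((2:ℝ)^s)⁻¹ • L.sum) - ((2:ℝ)^s)⁻¹ • L.sum‖ ≤ ε := by
  intro s
  induction s with
  | zero =>
    intro ε hε
    refine ⟨ε, hε, fun T hT L hL hmem => ?_⟩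
    obtain ⟨z, rfl⟩ := List.length_eq_one_iff.1 hL
    have hz := hmem z (by simp)
    simpa using hz
  | succ s IH =>
    intro ε hε
    obtain ⟨ηM, hηM, hmid⟩ := xu_mid (B := B) D hD0 ε hε
    obtain ⟨ηs, hηs, hind⟩ := IH (ηM/2) (by positivity)
    refine ⟨min ηs (ηM/2), by positivity, fun T hT L hL hmem => ?_⟩
    set η := min ηs (ηM/2) with hη
    have hη1 : η ≤ ηs := min_le_left _ _
    have hη2 : η ≤ ηM/2 := min_le_right _ _
    have hT' : ∀ u ∈ C, ∀ v ∈ C, ‖T u - T v‖ ≤ ‖u - v‖ + ηs :=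
      fun u hu v hv => (hT u hu v hv).trans (by linarith)
    have hlen : L.length = 2^s + 2^s := by rw [hL, pow_succ, Nat.mul_two]
    set L₁ := L.take (2^s) with hL₁
    set L₂ := L.drop (2^s) with hL₂
    have hlen₁ : L₁.length = 2^s := by
      rw [hL₁, List.length_take, hlen]; omega
    have hlen₂ : L₂.length = 2^s := by
      rw [hL₂, List.length_drop, hlen]; omega
    have hmem₁ : ∀ z ∈ L₁, z ∈ C ∧ ‖T z - z‖ ≤ ηs :=
      fun z hz => ⟨(hmem z (List.take_subset _ _ hz)).1,
        ((hmem z (List.take_subset _ _ hz)).2).trans hη1⟩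
    have hmem₂ : ∀ z ∈ L₂, z ∈ C ∧ ‖T z - z‖ ≤ ηs :=
      fun z hz => ⟨(hmem z (List.drop_subset _ _ hz)).1,
        ((hmem z (List.drop_subset _ _ hz)).2).trans hη1⟩
    obtain ⟨huC, hu⟩ := hind T hT' L₁ hlen₁ hmem₁
    obtain ⟨hvC, hv⟩ := hind T hT' L₂ hlen₂ hmem₂
    set u := ((2:ℝ)^s)⁻¹ • L₁.sum with hu'
    set v := ((2:ℝ)^s)⁻¹ • L₂.sum with hv'
    have hsum : L.sum = L₁.sum + L₂.sum := by
      rw [hL₁, hL₂, ← List.sum_append, List.take_append_drop]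
    have havg : ((2:ℝ)^(s+1))⁻¹ • L.sum = (2:ℝ)⁻¹ • (u + v) := by
      have h2 : ((2:ℝ)^(s+1))⁻¹ = 2⁻¹ * ((2:ℝ)^s)⁻¹ := by
        rw [pow_succ, mul_inv]; ring
      rw [hsum, hu', hv', h2, mul_smul, smul_add, smul_add]
    have hmidC : (2:ℝ)⁻¹ • (u + v) ∈ C := by
      have := hconv huC hvC (by norm_num : (0:ℝ) ≤ 1/2) (by norm_num : (0:ℝ) ≤ 1/2)
        (by norm_num : (1/2:ℝ) + 1/2 = 1)
      convert this using 1
      match_scalars <;> norm_num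
    have hd : ‖u - v‖ ≤ D := hD u huC v hvC
    have hmu : ‖(2:ℝ)⁻¹ • (u + v) - u‖ = ‖u - v‖ / 2 := by
      have : (2:ℝ)⁻¹ • (u + v) - u = (2:ℝ)⁻¹ • (v - u) := by module
      rw [this, norm_smul, norm_sub_rev]
      norm_num; ring
    have hmv : ‖(2:ℝ)⁻¹ • (u + v) - v‖ = ‖u - v‖ / 2 := by
      have : (2:ℝ)⁻¹ • (u + v) - v = (2:ℝ)⁻¹ • (u - v) := by module
      rw [this, norm_smul]
      norm_num; ring
    have hwu : ‖T ((2:ℝ)⁻¹ • (u + v)) - u‖ ≤ ‖u - v‖ / 2 + ηM := by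
      calc ‖T ((2:ℝ)⁻¹ • (u + v)) - u‖
          ≤ ‖T ((2:ℝ)⁻¹ • (u + v)) - T u‖ + ‖T u - u‖ := norm_sub_le_norm_sub_add_norm_sub _ _ _
        _ ≤ (‖(2:ℝ)⁻¹ • (u + v) - u‖ + η) + ηM/2 :=
            add_le_add (hT _ hmidC _ huC) hu
        _ ≤ ‖u - v‖ / 2 + ηM := by rw [hmu]; linarith
    have hwv : ‖T ((2:ℝ)⁻¹ • (u + v)) - v‖ ≤ ‖u - v‖ / 2 + ηM := by
      calc ‖T ((2:ℝ)⁻¹ • (u + v)) - v‖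
          ≤ ‖T ((2:ℝ)⁻¹ • (u + v)) - T v‖ + ‖T v - v‖ := norm_sub_le_norm_sub_add_norm_sub _ _ _
        _ ≤ (‖(2:ℝ)⁻¹ • (u + v) - v‖ + η) + ηM/2 :=
            add_le_add (hT _ hmidC _ hvC) hv
        _ ≤ ‖u - v‖ / 2 + ηM := by rw [hmv]; linarith
    have := hmid u v (T ((2:ℝ)⁻¹ • (u + v))) hd hwu hwv
    rw [havg]
    exact ⟨hmidC, this⟩

lemma xu_sep (w : ℕ → B) (hw : ∀ φ : B →L[ℝ] ℝ, Tendsto (fun j => φ (w j)) atTop (nhds 0))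
    (τ : ℝ) (hτ : 0 ≤ τ) (a : ℕ) (ha : τ < ‖w a‖) (M : ℕ) :
    ∃ b, M ≤ b ∧ τ < ‖w a - w b‖ := by
  have h0 : w a ≠ 0 := by
    intro h; rw [h, norm_zero] at ha; linarith
  obtain ⟨g, hg1, hg2⟩ := exists_dual_vector ℝ (w a) (norm_ne_zero_iff.2 h0)
  have ht : Tendsto (fun b => g (w a) - g (w b)) atTop (nhds (g (w a) - 0)) :=
    tendsto_const_nhds.sub (hw g)
  have hg2' : g (w a) = ‖w a‖ := by exact_mod_cast hg2
  rw [sub_zero] at ht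
  have hag : τ < g (w a) := by rw [hg2']; exact ha
  have hev : ∀ᶠ b in atTop, τ < g (w a) - g (w b) := ht.eventually_const_lt hag
  obtain ⟨b, hb1, hb2⟩ := (hev.and (eventually_ge_atTop M)).exists
  refine ⟨b, hb2, ?_⟩
  have : g (w a) - g (w b) = g (w a - w b) := (map_sub g _ _).symm
  rw [this] at hb1
  calc τ < g (w a - w b) := hb1
    _ ≤ ‖g (w a - w b)‖ := le_abs_self _
    _ ≤ ‖g‖ * ‖w a - w b‖ := g.le_opNorm _
    _ = ‖w a - w b‖ := by rw [hg1, one_mul]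


lemma xu_bs (G : Set B) (x₀ : B) (D τ δ' : ℝ) (hτ : 0 < τ) (hδ'0 : 0 < δ') (hδ'1 : δ' ≤ 1)
    (huc : ∀ r : ℝ, 0 < r → r ≤ D → ∀ u v : B, ‖u‖ ≤ r → ‖v‖ ≤ r → τ ≤ ‖u - v‖ →
      ‖u + v‖ ≤ (2 - δ') * r) :
    ∀ (t : ℕ) (r : ℝ) (l : ℕ) (w : ℕ → B), r ≤ D →
      (∀ φ : B →L[ℝ] ℝ, Tendsto (fun j => φ (w j)) atTop (nhds 0)) →
      (∀ j, ‖w j‖ ≤ r) →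
      (∀ j, ∃ Lst : List B, Lst.length = 2^l ∧ (∀ z ∈ Lst, z ∈ G) ∧
        w j = ((2:ℝ)^l)⁻¹ • Lst.sum - x₀) →
      ∃ (s : ℕ) (Lst : List B), s ≤ l + t ∧ Lst.length = 2^s ∧ (∀ z ∈ Lst, z ∈ G) ∧
        ‖((2:ℝ)^s)⁻¹ • Lst.sum - x₀‖ ≤ max τ (r * (1 - δ'/2)^t) := by
  intro t
  induction t with
  | zero =>
    intro r l w hrD hweak hnorm hprov
    obtain ⟨Lst, hlen, hmem, heq⟩ := hprov 0
    refine ⟨l, Lst, le_refl _, hlen, hmem, ?_⟩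
    rw [← heq]
    calc ‖w 0‖ ≤ r := hnorm 0
      _ = r * (1 - δ'/2)^0 := by norm_num
      _ ≤ max τ (r * (1 - δ'/2)^0) := le_max_right _ _
  | succ t IH =>
    intro r l w hrD hweak hnorm hprov
    by_cases hex : ∃ j, ‖w j‖ ≤ τ
    · obtain ⟨j, hj⟩ := hex
      obtain ⟨Lst, hlen, hmem, heq⟩ := hprov j
      exact ⟨l, Lst, by omega, hlen, hmem, by rw [← heq]; exact hj.trans (le_max_left _ _)⟩
    · push_neg at hex
      have hr0 : 0 < r := lt_of_lt_of_le (lt_of_lt_of_le hτ (le_of_lt (hex 0))) (hnorm 0)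
      have hsep : ∀ a M, ∃ b, M ≤ b ∧ τ < ‖w a - w b‖ :=
        fun a M => xu_sep w hweak τ hτ.le a (hex a) M
      set P : ℕ → ℕ × ℕ := fun n => Nat.rec (0, Classical.choose (hsep 0 1))
        (fun _ p => (p.2 + 1, Classical.choose (hsep (p.2+1) (p.2+2)))) n with hP
      have hPsucc : ∀ n, P (n+1) = ((P n).2 + 1,
          Classical.choose (hsep ((P n).2+1) ((P n).2+2))) := fun n => rfl
      have hPfact : ∀ n, (P n).1 + 1 ≤ (P n).2 ∧ τ < ‖w (P n).1 - w (P n).2‖ := by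
        intro n
        cases n with
        | zero =>
          have := Classical.choose_spec (hsep 0 1)
          exact ⟨this.1, this.2⟩
        | succ n =>
          have := Classical.choose_spec (hsep ((P n).2+1) ((P n).2+2))
          rw [hPsucc n]
          exact ⟨by omega, this.2⟩
      have hgrow : ∀ n, n ≤ (P n).1 := by
        intro n
        induction n with
        | zero => omega
        | succ n ih =>
          have h1 := (hPfact n).1
          rw [hPsucc n]
          simp only []
          omega
      set a : ℕ → ℕ := fun n => (P n).1 with ha
      set b : ℕ → ℕ := fun n => (P n).2 with hb
      have hgb : ∀ n, n ≤ b n := by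
        intro n
        have h1 := hgrow n
        have h2 := (hPfact n).1
        simp only [hb]
        omega
      set w' : ℕ → B := fun n => (2:ℝ)⁻¹ • (w (a n) + w (b n)) with hw'
      have hA : Tendsto a atTop atTop :=
        tendsto_atTop_atTop.2 fun q => ⟨q, fun n hn => le_trans hn (hgrow n)⟩
      have hB : Tendsto b atTop atTop :=
        tendsto_atTop_atTop.2 fun q => ⟨q, fun n hn => le_trans hn (hgb n)⟩
      have hweak' : ∀ φ : B →L[ℝ] ℝ, Tendsto (fun j => φ (w' j)) atTop (nhds 0) := by
        intro φ
        have h1 : Tendsto (fun n => φ (w (a n))) atTop (nhds 0) := (hweak φ).comp hA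
        have h2 : Tendsto (fun n => φ (w (b n))) atTop (nhds 0) := (hweak φ).comp hB
        have h3 := (h1.add h2).const_mul (2:ℝ)⁻¹
        simp only [add_zero, mul_zero] at h3
        convert h3 using 2 with n
        simp [hw', map_add, map_smul, smul_eq_mul]
        ring
      have hnorm' : ∀ n, ‖w' n‖ ≤ (1 - δ'/2) * r := by
        intro n
        have hs := huc r hr0 hrD (w (a n)) (w (b n)) (hnorm _) (hnorm _) (le_of_lt (hPfact n).2)
        have heq2 : ‖w' n‖ = 2⁻¹ * ‖w (a n) + w (b n)‖ := by
          show ‖(2:ℝ)⁻¹ • (w (a n) + w (b n))‖ = _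
          rw [norm_smul]
          norm_num
        rw [heq2]
        nlinarith [hs]
      have hprov' : ∀ j, ∃ Lst : List B, Lst.length = 2^(l+1) ∧ (∀ z ∈ Lst, z ∈ G) ∧
          w' j = ((2:ℝ)^(l+1))⁻¹ • Lst.sum - x₀ := by
        intro j
        obtain ⟨La, hlena, hmema, heqa⟩ := hprov (a j)
        obtain ⟨Lb, hlenb, hmemb, heqb⟩ := hprov (b j)
        refine ⟨La ++ Lb, ?_, ?_, ?_⟩
        · rw [List.length_append, hlena, hlenb, pow_succ, Nat.mul_two]
        · intro z hz
          rcases List.mem_append.1 hz with h | h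
          · exact hmema z h
          · exact hmemb z h
        · rw [List.sum_append]
          have hsc : ((2:ℝ)^(l+1))⁻¹ = 2⁻¹ * ((2:ℝ)^l)⁻¹ := by
            rw [pow_succ, mul_inv]; ring
          show (2:ℝ)⁻¹ • (w (a j) + w (b j)) = _
          rw [heqa, heqb, hsc]
          module
      have hrD' : (1 - δ'/2) * r ≤ D := by nlinarith
      obtain ⟨s, Lst, hs, hlen, hmem, hbound⟩ := IH ((1 - δ'/2) * r) (l+1) w' hrD' hweak' hnorm' hprov'
      refine ⟨s, Lst, by omega, hlen, hmem, ?_⟩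
      have : (1 - δ'/2) * r * (1 - δ'/2)^t = r * (1 - δ'/2)^(t+1) := by ring
      rwa [this] at hbound

end XuAux

theorem xu_demiclosedness {B : Type*} [NormedAddCommGroup B] [NormedSpace ℝ B]
    [UniformConvexSpace B] [CompleteSpace B]
    (C : Set B) (hne : C.Nonempty) (hbdd : Bornology.IsBounded C) (hcl : IsClosed C)
    (hconv : Convex ℝ C)
    (f : B → B) (hmaps : Set.MapsTo f C C)
    (k : ℕ → ℝ) (hk : Tendsto k atTop (nhds 1))
    (hasymp : ∀ m, ∀ x ∈ C, ∀ y ∈ C, ‖f^[m] x - f^[m] y‖ ≤ k m * ‖x - y‖)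
    (x : ℕ → B) (hx : ∀ n, x n ∈ C) (x₀ : B)
    (hweak : ∀ φ : B →L[ℝ] ℝ, Tendsto (fun n => φ (x n)) atTop (nhds (φ x₀)))
    (hfix : Tendsto (fun n => ‖x n - f (x n)‖) atTop (nhds 0)) :
    f x₀ = x₀ := by
  classical
  obtain ⟨D₀, hD₀⟩ := Metric.isBounded_iff.1 hbdd
  set D := max D₀ 0 with hDdef
  have hD0 : (0:ℝ) ≤ D := le_max_right _ _
  have hD : ∀ u ∈ C, ∀ v ∈ C, ‖u - v‖ ≤ D := by
    intro u hu v hv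
    rw [← dist_eq_norm]
    exact (hD₀ hu hv).trans (le_max_left _ _)
  have hx₀C : x₀ ∈ C := by
    by_contra hcon
    obtain ⟨φ, u, h1, h2⟩ := geometric_hahn_banach_closed_point hconv hcl hcon
    have hle : φ x₀ ≤ u := le_of_tendsto' (hweak φ) (fun n => (h1 (x n) (hx n)).le)
    linarith
  have hmapsI : ∀ m, Set.MapsTo f^[m] C C := fun m => hmaps.iterate m
  have hiter : ∀ m, ∀ z ∈ C, ‖f^[m] z - z‖ ≤ (∑ j ∈ Finset.range m, |k j|) * ‖f z - z‖ := by
    intro m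
    induction m with
    | zero =>
      intro z hz
      simp
    | succ m IH =>
      intro z hz
      have h1 : ‖f^[m+1] z - f^[m] z‖ ≤ k m * ‖f z - z‖ := by
        have := hasymp m (f z) (hmaps hz) z hz
        rwa [← Function.iterate_succ_apply] at this
      have h2 : k m * ‖f z - z‖ ≤ |k m| * ‖f z - z‖ :=
        mul_le_mul_of_nonneg_right (le_abs_self _) (norm_nonneg _)
      calc ‖f^[m+1] z - z‖ ≤ ‖f^[m+1] z - f^[m] z‖ + ‖f^[m] z - z‖ :=
            norm_sub_le_norm_sub_add_norm_sub _ _ _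
        _ ≤ |k m| * ‖f z - z‖ + (∑ j ∈ Finset.range m, |k j|) * ‖f z - z‖ :=
            add_le_add (h1.trans h2) (IH z hz)
        _ = (∑ j ∈ Finset.range (m+1), |k j|) * ‖f z - z‖ := by
            rw [Finset.sum_range_succ]; ring
  have hmain : Tendsto (fun m => f^[m] x₀) atTop (nhds x₀) := by
    rw [Metric.tendsto_atTop]
    intro θ hθ
    set τ := θ/5 with hτdef
    have hτ : 0 < τ := by positivity
    obtain ⟨δ₀, hδ₀, hucraw⟩ := xu_uc (B := B) (τ/(D+1)) (by positivity)
    set δ' := min δ₀ 1 with hδ'def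
    have hδ'0 : 0 < δ' := lt_min hδ₀ one_pos
    have hδ'1 : δ' ≤ 1 := min_le_right _ _
    have huc' : ∀ r : ℝ, 0 < r → r ≤ D → ∀ u v : B, ‖u‖ ≤ r → ‖v‖ ≤ r → τ ≤ ‖u - v‖ →
        ‖u + v‖ ≤ (2 - δ') * r := by
      intro r hr hrD u v hu hv hsep
      have h1 : (τ/(D+1)) * r ≤ ‖u - v‖ := by
        have h2 : (τ/(D+1)) * r ≤ τ := by
          rw [div_mul_eq_mul_div, div_le_iff₀ (by linarith : (0:ℝ) < D+1)]
          nlinarith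
        linarith
      have h3 := hucraw r hr.le u v hu hv h1
      have hδle : δ' ≤ δ₀ := min_le_left _ _
      nlinarith
    obtain ⟨t, ht⟩ := exists_pow_lt_of_lt_one (div_pos hτ (by linarith : (0:ℝ) < D+1))
      (show 1 - δ'/2 < 1 by linarith)
    have hDt : D * (1 - δ'/2)^t ≤ τ := by
      have hp0 : (0:ℝ) ≤ (1 - δ'/2)^t := pow_nonneg (by linarith) t
      have h4 : D * (1 - δ'/2)^t ≤ D * (τ/(D+1)) := by nlinarith [ht]
      have h5 : D * (τ/(D+1)) ≤ τ := by
        rw [mul_div_assoc'] at *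
        rw [div_le_iff₀ (by linarith : (0:ℝ) < D+1)]
        nlinarith
      linarith
    obtain ⟨η₀, hη₀, hdy⟩ := xu_dyadic C hconv D hD0 hD t τ hτ
    set η := min η₀ τ with hηdef
    have hη : 0 < η := lt_min hη₀ hτ
    have hηη₀ : η ≤ η₀ := min_le_left _ _
    have hητ : η ≤ τ := min_le_right _ _
    obtain ⟨M, hM⟩ := Metric.tendsto_atTop.1 hk (η/(D+1)) (by positivity)
    refine ⟨M, fun m hm => ?_⟩
    have hkm : |k m - 1| ≤ η/(D+1) := by
      have := hM m hm
      rw [Real.dist_eq] at this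
      linarith
    set T := f^[m] with hTdef
    have hT : ∀ u ∈ C, ∀ v ∈ C, ‖T u - T v‖ ≤ ‖u - v‖ + η := by
      intro u hu v hv
      have h1 : ‖T u - T v‖ ≤ k m * ‖u - v‖ := hasymp m u hu v hv
      have h2 : k m * ‖u - v‖ = ‖u - v‖ + (k m - 1) * ‖u - v‖ := by ring
      have habs : (k m - 1) * ‖u - v‖ ≤ |k m - 1| * ‖u - v‖ :=
        mul_le_mul_of_nonneg_right (le_abs_self _) (norm_nonneg _)
      have h3 : |k m - 1| * ‖u - v‖ ≤ |k m - 1| * D :=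
        mul_le_mul_of_nonneg_left (hD u hu v hv) (abs_nonneg _)
      have h4 : |k m - 1| * D ≤ η := by
        calc |k m - 1| * D ≤ (η/(D+1)) * D := mul_le_mul_of_nonneg_right hkm hD0
          _ ≤ η := by
            rw [div_mul_eq_mul_div, div_le_iff₀ (by linarith : (0:ℝ) < D+1)]
            nlinarith
      linarith
    set c := ∑ j ∈ Finset.range m, |k j| with hcdef
    have hc0 : 0 ≤ c := Finset.sum_nonneg fun j _ => abs_nonneg _
    obtain ⟨N, hN⟩ := Metric.tendsto_atTop.1 hfix (η/(c+1)) (by positivity)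
    have htail : ∀ n, N ≤ n → ‖T (x n) - x n‖ ≤ η := by
      intro n hn
      have h1 := hN n hn
      rw [Real.dist_eq, sub_zero, abs_of_nonneg (norm_nonneg _)] at h1
      have h2 : ‖T (x n) - x n‖ ≤ c * ‖f (x n) - x n‖ := hiter m (x n) (hx n)
      have h3 : ‖f (x n) - x n‖ = ‖x n - f (x n)‖ := norm_sub_rev _ _
      calc ‖T (x n) - x n‖ ≤ c * ‖x n - f (x n)‖ := by rw [← h3]; exact h2
        _ ≤ c * (η/(c+1)) := mul_le_mul_of_nonneg_left h1.le hc0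
        _ ≤ η := by
          rw [mul_div_assoc', div_le_iff₀ (by linarith : (0:ℝ) < c+1)]
          nlinarith
    set G : Set B := {z | ∃ n, N ≤ n ∧ z = x n} with hGdef
    set w : ℕ → B := fun j => x (j + N) - x₀ with hwdef
    have hw_weak : ∀ φ : B →L[ℝ] ℝ, Tendsto (fun j => φ (w j)) atTop (nhds 0) := by
      intro φ
      have h1 : Tendsto (fun j => φ (x (j + N))) atTop (nhds (φ x₀)) :=
        (hweak φ).comp (tendsto_add_atTop_nat N)
      have h2 := h1.sub (tendsto_const_nhds (α := ℕ) (x := φ x₀) (f := atTop))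
      simp only [sub_self] at h2
      convert h2 using 2 with j
      simp [hwdef, map_sub]
    have hw_norm : ∀ j, ‖w j‖ ≤ D := fun j => hD _ (hx _) _ hx₀C
    have hw_prov : ∀ j, ∃ Lst : List B, Lst.length = 2^0 ∧ (∀ z ∈ Lst, z ∈ G) ∧
        w j = ((2:ℝ)^0)⁻¹ • Lst.sum - x₀ := by
      intro j
      refine ⟨[x (j + N)], by simp, ?_, by simp [hwdef]⟩
      intro z hz
      simp only [List.mem_singleton] at hz
      exact ⟨j + N, by omega, hz⟩
    obtain ⟨s, Lst, hs, hlen, hmemG, hbound⟩ :=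
      xu_bs G x₀ D τ δ' hτ hδ'0 hδ'1 huc' t D 0 w (le_refl D) hw_weak hw_norm hw_prov
    have hst : s ≤ t := by omega
    have hbound' : ‖((2:ℝ)^s)⁻¹ • Lst.sum - x₀‖ ≤ τ := hbound.trans (max_le (le_refl τ) hDt)
    set L' : List B := (List.replicate (2^(t-s)) Lst).flatten with hL'def
    have hlen' : L'.length = 2^t := by
      rw [hL'def, List.length_flatten, List.map_replicate, List.sum_replicate, hlen,
        smul_eq_mul, ← pow_add]
      congr 1
      omega
    have hmem' : ∀ z ∈ L', z ∈ G := by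
      intro z hz
      rw [hL'def, List.mem_flatten] at hz
      obtain ⟨l, hl, hzl⟩ := hz
      rw [List.mem_replicate] at hl
      exact hmemG z (hl.2 ▸ hzl)
    have hsum' : L'.sum = (2^(t-s) : ℕ) • Lst.sum := by
      rw [hL'def, List.sum_flatten, List.map_replicate, List.sum_replicate]
    have havg : ((2:ℝ)^t)⁻¹ • L'.sum = ((2:ℝ)^s)⁻¹ • Lst.sum := by
      rw [hsum', ← Nat.cast_smul_eq_nsmul ℝ, smul_smul]
      congr 1
      have hcast : ((2^(t-s) : ℕ) : ℝ) = (2:ℝ)^(t-s) := by push_cast; ring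
      have h2t : (2:ℝ)^t = (2:ℝ)^(t-s) * (2:ℝ)^s := by
        rw [← pow_add]
        congr 1
        omega
      rw [hcast, h2t, mul_inv]
      have hne1 : ((2:ℝ)^(t-s)) ≠ 0 := by positivity
      field_simp
    have hmemC : ∀ z ∈ L', z ∈ C ∧ ‖T z - z‖ ≤ η₀ := by
      intro z hz
      obtain ⟨n, hn, rfl⟩ := hmem' z hz
      exact ⟨hx n, (htail n hn).trans hηη₀⟩
    have hT' : ∀ u ∈ C, ∀ v ∈ C, ‖T u - T v‖ ≤ ‖u - v‖ + η₀ :=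
      fun u hu v hv => (hT u hu v hv).trans (by linarith)
    obtain ⟨hyC, hTy⟩ := hdy T hT' L' hlen' hmemC
    rw [havg] at hyC hTy
    set y := ((2:ℝ)^s)⁻¹ • Lst.sum with hydef
    have hxy : ‖y - x₀‖ ≤ τ := hbound'
    have h1 : ‖T x₀ - T y‖ ≤ ‖x₀ - y‖ + η := hT x₀ hx₀C y hyC
    rw [dist_eq_norm]
    have hsplit : T x₀ - x₀ = (T x₀ - T y) + ((T y - y) + (y - x₀)) := by abel
    have hx₀y : ‖x₀ - y‖ ≤ τ := by rw [norm_sub_rev]; exact hxy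
    calc ‖T x₀ - x₀‖ = ‖(T x₀ - T y) + ((T y - y) + (y - x₀))‖ := by rw [← hsplit]
      _ ≤ ‖T x₀ - T y‖ + (‖T y - y‖ + ‖y - x₀‖) :=
          (norm_add_le _ _).trans (by linarith [norm_add_le (T y - y) (y - x₀)])
      _ ≤ (‖x₀ - y‖ + η) + (τ + τ) := by linarith [hTy]
      _ ≤ (τ + τ) + (τ + τ) := by linarith
      _ < θ := by rw [hτdef] at *; linarith
  have h1 : Tendsto (fun m => f^[m+1] x₀) atTop (nhds x₀) :=
    hmain.comp (tendsto_add_atTop_nat 1)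
  have hnorm0 : Tendsto (fun m => ‖f^[m] x₀ - x₀‖) atTop (nhds 0) :=
    tendsto_iff_norm_sub_tendsto_zero.1 hmain
  have h2 : Tendsto (fun m => f^[m+1] x₀) atTop (nhds (f x₀)) := by
    rw [tendsto_iff_norm_sub_tendsto_zero]
    apply squeeze_zero (g := fun m => |k 1| * ‖f^[m] x₀ - x₀‖) (fun m => norm_nonneg _)
    · intro m
      have h3 : ‖f^[1] (f^[m] x₀) - f^[1] x₀‖ ≤ k 1 * ‖f^[m] x₀ - x₀‖ :=
        hasymp 1 _ (hmapsI m hx₀C) _ hx₀C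
      have h4 : f^[m+1] x₀ = f (f^[m] x₀) := Function.iterate_succ_apply' f m x₀
      rw [h4]
      exact h3.trans (mul_le_mul_of_nonneg_right (le_abs_self _) (norm_nonneg _))
    · simpa using hnorm0.const_mul |k 1|
  exact tendsto_nhds_unique h2 h1
end

section
/- Let (B, ‖·‖) be a Banach space satisfying Opial's condition, C a nonempty closed convex subset of B, and f : C → B a nonexpansive mapping. If (x_n) is a sequence in C converging weakly to x ∈ C and x_n − f(x_n) → y strongly, then x − f(x) = y. -/
open Filter

theorem browder_demiclosedness_opial {B : Type*} [NormedAddCommGroup B] [NormedSpace ℝ B]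
    [CompleteSpace B]
    (hopial : ∀ (u : ℕ → B) (x z : B),
      (∀ φ : B →L[ℝ] ℝ, Tendsto (fun n => φ (u n)) atTop (nhds (φ x))) → x ≠ z →
        liminf (fun n => ‖u n - x‖) atTop < liminf (fun n => ‖u n - z‖) atTop)
    (C : Set B) (hne : C.Nonempty) (hcl : IsClosed C) (hconv : Convex ℝ C)
    (f : B → B) (hnonexp : ∀ u ∈ C, ∀ v ∈ C, ‖f u - f v‖ ≤ ‖u - v‖)
    (x : ℕ → B) (hx : ∀ n, x n ∈ C) (x₀ : B) (hx₀ : x₀ ∈ C)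
    (hweak : ∀ φ : B →L[ℝ] ℝ, Tendsto (fun n => φ (x n)) atTop (nhds (φ x₀)))
    (y : B) (hstrong : Tendsto (fun n => x n - f (x n)) atTop (nhds y)) :
    x₀ - f x₀ = y := by
  by_contra hne'
  set z := f x₀ + y with hz
  have hxz : x₀ ≠ z := by
    intro h
    exact hne' (sub_eq_iff_eq_add.mpr (h.trans (add_comm _ _)))
  have hop := hopial x x₀ z hweak hxz
  -- the sequence is norm bounded (Banach–Steinhaus)
  obtain ⟨M, hM⟩ : ∃ M, ∀ n, ‖x n‖ ≤ M := by
    obtain ⟨C', hC'⟩ := banach_steinhaus (E := StrongDual ℝ B) (F := ℝ)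
      (g := fun n => NormedSpace.inclusionInDoubleDual ℝ B (x n)) (fun φ => by
        have h1 : Tendsto (fun n => ‖φ (x n)‖) atTop (nhds ‖φ x₀‖) := (hweak φ).norm
        obtain ⟨c, hc⟩ := h1.bddAbove_range
        exact ⟨c, fun n => hc ⟨n, rfl⟩⟩)
    refine ⟨C', fun n => ?_⟩
    have : ‖x n‖ = ‖NormedSpace.inclusionInDoubleDual ℝ B (x n)‖ :=
      ((NormedSpace.inclusionInDoubleDualLi ℝ (E := B)).norm_map (x n)).symm
    rw [this]; exact hC' n
  have hK : ∀ n, ‖x n - x₀‖ ≤ M + ‖x₀‖ := fun n =>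
    (norm_sub_le _ _).trans (add_le_add_left (hM n) _)
  -- x n - f (x n) - y → 0
  have ha : Tendsto (fun n => ‖x n - f (x n) - y‖) atTop (nhds 0) := by
    have := (hstrong.sub_const y).norm
    simpa using this
  -- the key pointwise estimate
  have hkey : ∀ n, ‖x n - z‖ ≤ ‖x n - f (x n) - y‖ + ‖x n - x₀‖ := by
    intro n
    have h1 : x n - z = (x n - f (x n) - y) + (f (x n) - f x₀) := by rw [hz]; abel
    calc ‖x n - z‖ = ‖(x n - f (x n) - y) + (f (x n) - f x₀)‖ := by rw [h1]
      _ ≤ ‖x n - f (x n) - y‖ + ‖f (x n) - f x₀‖ := norm_add_le _ _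
      _ ≤ ‖x n - f (x n) - y‖ + ‖x n - x₀‖ :=
          add_le_add_right (hnonexp _ (hx n) _ hx₀) _
  -- liminf ‖x n - z‖ ≤ liminf ‖x n - x₀‖
  have hle : liminf (fun n => ‖x n - z‖) atTop ≤ liminf (fun n => ‖x n - x₀‖) atTop := by
    refine le_of_forall_pos_le_add fun ε hε => ?_
    have hev : ∀ᶠ n in atTop, ‖x n - f (x n) - y‖ ≤ ε :=
      ha.eventually (eventually_le_nhds hε)
    have hev2 : ∀ᶠ n in atTop, ‖x n - z‖ ≤ ‖x n - x₀‖ + ε := by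
      filter_upwards [hev] with n hn
      calc ‖x n - z‖ ≤ ‖x n - f (x n) - y‖ + ‖x n - x₀‖ := hkey n
        _ ≤ ε + ‖x n - x₀‖ := add_le_add_left hn _
        _ = ‖x n - x₀‖ + ε := add_comm _ _
    have hcob : IsBoundedUnder (· ≥ ·) atTop (fun n => ‖x n - z‖) :=
      isBoundedUnder_of ⟨0, fun n => norm_nonneg _⟩
    have hbdd : IsCoboundedUnder (· ≥ ·) atTop (fun n => ‖x n - x₀‖ + ε) :=
      isCoboundedUnder_ge_of_eventually_le atTop
        (Eventually.of_forall fun n => add_le_add_left ((norm_sub_le _ _).trans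
          (add_le_add_left (hM n) ‖x₀‖)) ε)
    have h3 : liminf (fun n => ‖x n - z‖) atTop ≤ liminf (fun n => ‖x n - x₀‖ + ε) atTop :=
      liminf_le_liminf hev2 hcob hbdd
    have h4 : liminf (fun n => ‖x n - x₀‖ + ε) atTop
        = liminf (fun n => ‖x n - x₀‖) atTop + ε :=
      liminf_add_const atTop _ ε
        (isCoboundedUnder_ge_of_eventually_le atTop (Eventually.of_forall hK))
        (isBoundedUnder_of ⟨0, fun n => norm_nonneg _⟩)
    rw [h4] at h3
    exact h3
  exact absurd hop (not_lt.mpr hle)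
end
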